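/- For any simple graph G, the graph energy satisfies E(G) ≥ 2R(G), where R(G) = Σ_{(i,j) ∈ E(G)} 1/√(deg(i)·deg(j)) is the Randić index. -/

import Mathlib

open Finset Matrix

noncomputable section

variable {V : Type*} [Fintype V] [DecidableEq V]

/-- The adjacency matrix of a simple graph is Hermitian (over ℝ). -/
theorem SimpleGraph.isHermitian_adjMatrix' (G : SimpleGraph V) [DecidableRel G.Adj] :
    (G.adjMatrix ℝ).IsHermitian := by
  rw [Matrix.IsHermitian, Matrix.conjTranspose_eq_transpose_of_trivial]
  exact G.isSymm_adjMatrix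

/-- The energy of a graph: the sum of the absolute values of the
eigenvalues of its adjacency matrix. -/
def SimpleGraph.energy (G : SimpleGraph V) [DecidableRel G.Adj] : ℝ :=
  ∑ k, |G.isHermitian_adjMatrix'.eigenvalues k|

/-- The Randić index of a graph: the sum over the (unordered) edges `(i,j)`
of `1/√(deg i · deg j)`. -/
def SimpleGraph.randic (G : SimpleGraph V) [DecidableRel G.Adj] : ℝ :=
  ∑ e ∈ G.edgeFinset,
    Sym2.lift ⟨fun i j => 1 / Real.sqrt (G.degree i * G.degree j),
      fun i j => by simp [mul_comm]⟩ e

end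

section Aux

open SimpleGraph

variable {V : Type*} [Fintype V] [DecidableEq V]

private lemma row_sum' (G : SimpleGraph V) [DecidableRel G.Adj] (i : V) :
    ∑ j, (G.adjMatrix ℝ) i j = (G.degree i : ℝ) := by
  have := SimpleGraph.adjMatrix_mulVec_const_apply (G := G) (α := ℝ) (a := 1) (v := i)
  simpa [Matrix.mulVec, dotProduct] using this

private lemma pointwise' (G : SimpleGraph V) [DecidableRel G.Adj] (u : V → ℝ) (i j : V) :
    |u i * ((G.adjMatrix ℝ) i j / Real.sqrt ((G.degree i : ℝ) * (G.degree j : ℝ))) * u j|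
      ≤ (G.adjMatrix ℝ) i j * (u i ^ 2 / G.degree i + u j ^ 2 / G.degree j) / 2 := by
  by_cases h : G.Adj i j
  · have hdi : (0 : ℝ) < G.degree i := by
      exact_mod_cast G.degree_pos_iff_exists_adj i |>.2 ⟨j, h⟩
    have hdj : (0 : ℝ) < G.degree j := by
      exact_mod_cast G.degree_pos_iff_exists_adj j |>.2 ⟨i, h.symm⟩
    rw [SimpleGraph.adjMatrix_apply, if_pos h]
    have hsq : Real.sqrt ((G.degree i : ℝ) * (G.degree j : ℝ))
        = Real.sqrt (G.degree i) * Real.sqrt (G.degree j) := Real.sqrt_mul (by positivity) _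
    have key : |u i| / Real.sqrt (G.degree i) * (|u j| / Real.sqrt (G.degree j))
        ≤ ((|u i| / Real.sqrt (G.degree i)) ^ 2 + (|u j| / Real.sqrt (G.degree j)) ^ 2) / 2 := by
      nlinarith [sq_nonneg (|u i| / Real.sqrt (G.degree i) - |u j| / Real.sqrt (G.degree j))]
    have e1 : (|u i| / Real.sqrt (G.degree i)) ^ 2 = u i ^ 2 / G.degree i := by
      rw [div_pow, sq_abs, Real.sq_sqrt hdi.le]
    have e2 : (|u j| / Real.sqrt (G.degree j)) ^ 2 = u j ^ 2 / G.degree j := by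
      rw [div_pow, sq_abs, Real.sq_sqrt hdj.le]
    calc |u i * (1 / Real.sqrt ((G.degree i : ℝ) * (G.degree j : ℝ))) * u j|
        = |u i| / Real.sqrt (G.degree i) * (|u j| / Real.sqrt (G.degree j)) := by
          rw [abs_mul, abs_mul, abs_div, abs_one, hsq,
            abs_of_nonneg (by positivity : (0:ℝ) ≤ Real.sqrt (G.degree i) * Real.sqrt (G.degree j))]
          field_simp
      _ ≤ _ := by rw [e1, e2] at key; linarith [key]
  · simp [SimpleGraph.adjMatrix_apply, if_neg h, h]

private lemma quad' (G : SimpleGraph V) [DecidableRel G.Adj] (u : V → ℝ) :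
    |∑ i, ∑ j, u i * ((G.adjMatrix ℝ) i j / Real.sqrt ((G.degree i : ℝ) * (G.degree j : ℝ))) * u j|
      ≤ ∑ i, u i ^ 2 := by
  have half : ∀ i : V, ∑ j, (G.adjMatrix ℝ) i j * (u i ^ 2 / G.degree i) / 2 ≤ u i ^ 2 / 2 := by
    intro i
    have : ∑ j, (G.adjMatrix ℝ) i j * (u i ^ 2 / G.degree i) / 2
        = (G.degree i : ℝ) * (u i ^ 2 / G.degree i) / 2 := by
      rw [← row_sum' G i, Finset.sum_mul, Finset.sum_div]
    rw [this]
    rcases eq_or_ne (G.degree i : ℝ) 0 with h0 | h0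
    · rw [h0]; simp; positivity
    · rw [mul_div_cancel₀ _ h0]
  calc |∑ i, ∑ j, u i * ((G.adjMatrix ℝ) i j / Real.sqrt ((G.degree i : ℝ) * (G.degree j : ℝ))) * u j|
      ≤ ∑ i, ∑ j, |u i * ((G.adjMatrix ℝ) i j / Real.sqrt ((G.degree i : ℝ) * (G.degree j : ℝ))) * u j| := by
        refine (Finset.abs_sum_le_sum_abs _ _).trans ?_
        exact Finset.sum_le_sum fun i _ => Finset.abs_sum_le_sum_abs _ _
    _ ≤ ∑ i, ∑ j, (G.adjMatrix ℝ) i j * (u i ^ 2 / G.degree i + u j ^ 2 / G.degree j) / 2 :=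
        Finset.sum_le_sum fun i _ => Finset.sum_le_sum fun j _ => pointwise' G u i j
    _ = ∑ i, ∑ j, ((G.adjMatrix ℝ) i j * (u i ^ 2 / G.degree i) / 2
          + (G.adjMatrix ℝ) i j * (u j ^ 2 / G.degree j) / 2) := by
        congr 1; ext i; congr 1; ext j; ring
    _ = ∑ i, ∑ j, (G.adjMatrix ℝ) i j * (u i ^ 2 / G.degree i) / 2
        + ∑ i, ∑ j, (G.adjMatrix ℝ) i j * (u j ^ 2 / G.degree j) / 2 := by
        rw [← Finset.sum_add_distrib]; congr 1; ext i; rw [Finset.sum_add_distrib]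
    _ = ∑ i, ∑ j, (G.adjMatrix ℝ) i j * (u i ^ 2 / G.degree i) / 2
        + ∑ j, ∑ i, (G.adjMatrix ℝ) j i * (u i ^ 2 / G.degree i) / 2 := by
        rw [Finset.sum_comm (f := fun i j => (G.adjMatrix ℝ) i j * (u j ^ 2 / G.degree j) / 2)]
    _ = ∑ i, ∑ j, (G.adjMatrix ℝ) i j * (u i ^ 2 / G.degree i) / 2
        + ∑ j, ∑ i, (G.adjMatrix ℝ) i j * (u i ^ 2 / G.degree i) / 2 := by
        congr 1; refine Finset.sum_congr rfl fun j _ => Finset.sum_congr rfl fun i _ => ?_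
        simp only [SimpleGraph.adjMatrix_apply]
        congr 2
        exact if_congr (G.adj_comm j i) rfl rfl
    _ = ∑ i, ∑ j, (G.adjMatrix ℝ) i j * (u i ^ 2 / G.degree i) / 2
        + ∑ i, ∑ j, (G.adjMatrix ℝ) i j * (u i ^ 2 / G.degree i) / 2 := by
        congr 1; exact Finset.sum_comm
    _ ≤ ∑ i, u i ^ 2 / 2 + ∑ i, u i ^ 2 / 2 := by
        have := Finset.sum_le_sum fun i (_ : i ∈ (univ : Finset V)) => half i
        linarith
    _ = ∑ i, u i ^ 2 := by rw [← Finset.sum_add_distrib]; simp [add_halves]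

private lemma sum_adj_eq' (G : SimpleGraph V) [DecidableRel G.Adj] (f : Sym2 V → ℝ) :
    ∑ i, ∑ j, (if G.Adj i j then f s(i, j) else 0) = 2 * ∑ e ∈ G.edgeFinset, f e := by
  have h1 : ∑ i, ∑ j, (if G.Adj i j then f s(i, j) else 0)
      = ∑ d : G.Dart, f d.edge := by
    rw [show (∑ i, ∑ j, if G.Adj i j then f s(i, j) else 0)
        = ∑ p : V × V, (if G.Adj p.1 p.2 then f s(p.1, p.2) else 0) from
      (Fintype.sum_prod_type (fun p : V × V => if G.Adj p.1 p.2 then f s(p.1, p.2) else 0)).symm]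
    rw [show (∑ p : V × V, if G.Adj p.1 p.2 then f s(p.1, p.2) else 0)
        = ∑ p ∈ univ.filter (fun p : V × V => G.Adj p.1 p.2), f s(p.1, p.2) from
      (Finset.sum_filter _ _).symm]
    refine (Finset.sum_bij' (fun (d : G.Dart) (_ : d ∈ univ) => (d.fst, d.snd))
      (fun p hp => SimpleGraph.Dart.mk p (by simpa using hp)) ?_ ?_ ?_ ?_ ?_).symm
    · intro d _; simp [d.adj]
    · intro p hp; simp
    · intro d _; rfl
    · intro p hp; rfl
    · intro d _; rfl
  rw [h1]
  rw [← Finset.sum_fiberwise_of_maps_to (g := SimpleGraph.Dart.edge) (t := G.edgeFinset)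
      (fun d _ => by rw [SimpleGraph.mem_edgeFinset]; exact d.edge_mem) (fun d => f d.edge)]
  rw [Finset.mul_sum]
  refine Finset.sum_congr rfl fun e he => ?_
  have hcard : #({d : G.Dart | d.edge = e} : Finset _) = 2 :=
    G.dart_edge_fiber_card e (SimpleGraph.mem_edgeFinset.1 he)
  calc ∑ d ∈ Finset.univ.filter (fun d : G.Dart => d.edge = e), f d.edge
      = ∑ d ∈ Finset.univ.filter (fun d : G.Dart => d.edge = e), f e := by
        refine Finset.sum_congr rfl fun d hd => ?_
        rw [(Finset.mem_filter.1 hd).2]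
    _ = 2 * f e := by rw [Finset.sum_const, hcard]; simp [two_smul]; ring

end Aux

section Main

variable {V : Type*} [Fintype V] [DecidableEq V]

/-- Normalized adjacency matrix. -/
private noncomputable def XX (G : SimpleGraph V) [DecidableRel G.Adj] : Matrix V V ℝ :=
  Matrix.of fun i j => (G.adjMatrix ℝ) i j / Real.sqrt ((G.degree i : ℝ) * (G.degree j : ℝ))

private lemma step1' (G : SimpleGraph V) [DecidableRel G.Adj] :
    2 * G.randic = Matrix.trace (G.adjMatrix ℝ * XX G) := by
  have h : Matrix.trace (G.adjMatrix ℝ * XX G) = ∑ i, ∑ j, (G.adjMatrix ℝ) i j * XX G j i := by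
    rw [Matrix.trace]
    refine Finset.sum_congr rfl fun i _ => ?_
    rw [Matrix.diag_apply, Matrix.mul_apply]
  rw [h]
  rw [SimpleGraph.randic, ← sum_adj_eq' G]
  refine Finset.sum_congr rfl fun i _ => Finset.sum_congr rfl fun j _ => ?_
  by_cases hadj : G.Adj i j
  · rw [if_pos hadj, Sym2.lift_mk]
    simp only [XX, Matrix.of_apply, SimpleGraph.adjMatrix_apply, if_pos hadj, if_pos hadj.symm]
    rw [mul_comm ((G.degree j : ℝ)) ((G.degree i : ℝ))]
    ring
  · rw [if_neg hadj]
    simp [XX, hadj, fun hc : G.Adj j i => hadj hc.symm]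

private lemma step2' (G : SimpleGraph V) [DecidableRel G.Adj] :
    Matrix.trace (G.adjMatrix ℝ * XX G)
      = ∑ k, G.isHermitian_adjMatrix'.eigenvalues k *
          ((star (G.isHermitian_adjMatrix'.eigenvectorUnitary : Matrix V V ℝ) * XX G *
            (G.isHermitian_adjMatrix'.eigenvectorUnitary : Matrix V V ℝ)) k k) := by
  set hA := G.isHermitian_adjMatrix'
  set U := (hA.eigenvectorUnitary : Matrix V V ℝ) with hU
  conv_lhs => rw [hA.spectral_theorem, Unitary.conjStarAlgAut_apply]
  rw [show ((U * diagonal (RCLike.ofReal ∘ hA.eigenvalues) * star U) * XX G)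
      = U * (diagonal (RCLike.ofReal ∘ hA.eigenvalues) * (star U * XX G)) by
    simp [Matrix.mul_assoc]]
  rw [Matrix.trace_mul_comm]
  rw [show (diagonal (RCLike.ofReal ∘ hA.eigenvalues) * (star U * XX G) * U)
      = diagonal (RCLike.ofReal ∘ hA.eigenvalues) * (star U * XX G * U) by
    simp [Matrix.mul_assoc]]
  rw [Matrix.trace]
  refine Finset.sum_congr rfl fun k _ => ?_
  rw [Matrix.diag_apply, Matrix.diagonal_mul]
  simp [RCLike.ofReal]

private lemma step3' (G : SimpleGraph V) [DecidableRel G.Adj] (k : V) :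
    |(star (G.isHermitian_adjMatrix'.eigenvectorUnitary : Matrix V V ℝ) * XX G *
        (G.isHermitian_adjMatrix'.eigenvectorUnitary : Matrix V V ℝ)) k k| ≤ 1 := by
  set hA := G.isHermitian_adjMatrix'
  set U := (hA.eigenvectorUnitary : Matrix V V ℝ) with hU
  set u : V → ℝ := fun i => U i k with hu
  have hnorm : ∑ i, u i ^ 2 = 1 := by
    have h1 : star U * U = 1 := Unitary.coe_star_mul_self hA.eigenvectorUnitary
    have h2 := congrFun (congrFun h1 k) k
    rw [Matrix.mul_apply] at h2
    simp only [Matrix.star_apply, star_trivial] at h2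
    rw [Matrix.one_apply_eq] at h2
    rw [← h2]
    exact Finset.sum_congr rfl fun i _ => sq (u i)
  have hentry : (star U * XX G * U) k k = ∑ i, ∑ j, u i * XX G i j * u j := by
    rw [Matrix.mul_apply]
    rw [Finset.sum_comm]
    refine Finset.sum_congr rfl fun j _ => ?_
    rw [Matrix.mul_apply, Finset.sum_mul]
    refine Finset.sum_congr rfl fun i _ => ?_
    rw [Matrix.star_apply, star_trivial]
  rw [hentry, ← hnorm]
  have := quad' G u
  simpa [XX] using this

end Main

/-- For any simple graph `G`, the energy satisfies `E(G) ≥ 2 R(G)` where `R(G)`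
is the Randić index. -/
theorem stmt3 {V : Type*} [Fintype V] [DecidableEq V]
    (G : SimpleGraph V) [DecidableRel G.Adj] :
    2 * G.randic ≤ G.energy := by
  rw [step1' G, step2' G, SimpleGraph.energy]
  set hA := G.isHermitian_adjMatrix'
  set U := (hA.eigenvectorUnitary : Matrix V V ℝ) with hU
  calc ∑ k, hA.eigenvalues k * ((star U * XX G * U) k k)
      ≤ ∑ k, |hA.eigenvalues k * ((star U * XX G * U) k k)| :=
        Finset.sum_le_sum fun k _ => le_abs_self _
    _ = ∑ k, |hA.eigenvalues k| * |(star U * XX G * U) k k| :=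
        Finset.sum_congr rfl fun k _ => abs_mul _ _
    _ ≤ ∑ k, |hA.eigenvalues k| * 1 :=
        Finset.sum_le_sum fun k _ =>
          mul_le_mul_of_nonneg_left (step3' G k) (abs_nonneg _)
    _ = ∑ k, |hA.eigenvalues k| := by simp
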